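/- Let α ∈ (0,1), γ ∈ [0,1), let d : S → ℝ be a probability distribution with d(s) > 0 for all s, D the diagonal matrix of d, P an n×n row-stochastic nonnegative matrix, A = I + α(γ D P − D), and ρ = 1 − α·d_min·(1−γ) with d_min = min_s d(s). Then there exists a symmetric positive definite matrix M (namely M = Σ_{k=0}^∞ (A^k)^T A^k, which converges) such that A^T M A = M − I, λ_min(M) ≥ 1, and λ_max(M) ≤ n/(1−ρ). -/

import Mathlib

open Finset Matrix

/-- The largest eigenvalue of a real matrix: the supremum of the set of its real
eigenvalues.  For a real symmetric matrix this is the usual `λ_max`. -/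
noncomputable def lamMax {S : Type*} [Fintype S] (M : Matrix S S ℝ) : ℝ :=
  sSup {μ : ℝ | ∃ v : S → ℝ, v ≠ 0 ∧ M.mulVec v = μ • v}

/-- The smallest eigenvalue of a real matrix: the infimum of the set of its real
eigenvalues.  For a real symmetric matrix this is the usual `λ_min`. -/
noncomputable def lamMin {S : Type*} [Fintype S] (M : Matrix S S ℝ) : ℝ :=
  sInf {μ : ℝ | ∃ v : S → ℝ, v ≠ 0 ∧ M.mulVec v = μ • v}

/-- **Existence of a Lyapunov matrix for the TD system matrix.**  Let `α ∈ (0,1)`,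
`γ ∈ [0,1)`, `d` a probability distribution on the finite nonempty state space `S` with
`d(s) > 0` for all `s`, `D = diag(d)`, `P` a row-stochastic matrix with nonnegative
entries, `A = I + α(γ D P − D)`, and `ρ = 1 − α·d_min·(1−γ)` with `d_min = min_s d(s)`.
Then there exists a symmetric positive definite matrix `M` — namely
`M = ∑_{k=0}^∞ (A^k)ᵀ A^k`, which converges — such that `Aᵀ M A = M − I`,
`λ_min(M) ≥ 1` and `λ_max(M) ≤ n/(1−ρ)`, where `n = |S|`. -/
theorem td_lyapunov_matrix_exists
    {S : Type*} [Fintype S] [Nonempty S] [DecidableEq S]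
    (γ α : ℝ) (hγ0 : 0 ≤ γ) (hγ1 : γ < 1) (hα0 : 0 < α) (hα1 : α < 1)
    (d : S → ℝ) (hd : ∀ s, 0 < d s) (hd1 : ∑ s, d s = 1)
    (P : Matrix S S ℝ) (hP0 : ∀ i j, 0 ≤ P i j) (hP1 : ∀ i, ∑ j, P i j = 1)
    (A : Matrix S S ℝ)
    (hA : A = 1 + α • (γ • (Matrix.diagonal d * P) - Matrix.diagonal d))
    (ρ : ℝ) (hρ : ρ = 1 - α * (⨅ s : S, d s) * (1 - γ)) :
    ∃ M : Matrix S S ℝ,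
      M.PosDef ∧
      Summable (fun k : ℕ => (A ^ k)ᵀ * (A ^ k)) ∧
      M = ∑' k : ℕ, (A ^ k)ᵀ * (A ^ k) ∧
      Aᵀ * M * A = M - 1 ∧
      1 ≤ lamMin M ∧
      lamMax M ≤ (Fintype.card S : ℝ) / (1 - ρ) := by
  classical
  -- basic facts about d and ρ
  obtain ⟨s₀, hs₀⟩ := Finite.exists_min d
  have hbdd : BddBelow (Set.range d) := (Set.finite_range d).bddBelow
  have hdmin_pos : 0 < ⨅ s : S, d s := lt_of_lt_of_le (hd s₀) (le_ciInf hs₀)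
  have hdmin_le : ∀ s, (⨅ s : S, d s) ≤ d s := fun s => ciInf_le hbdd s
  have hds_le_one : ∀ s, d s ≤ 1 := by
    intro s; rw [← hd1]
    exact Finset.single_le_sum (fun i _ => (hd i).le) (Finset.mem_univ s)
  have hdmin_le_one : (⨅ s : S, d s) ≤ 1 := (hdmin_le s₀).trans (hds_le_one s₀)
  have hρ1 : ρ < 1 := by
    rw [hρ]; nlinarith [mul_pos (mul_pos hα0 hdmin_pos) (by linarith : (0:ℝ) < 1 - γ)]
  have hρ0 : 0 ≤ ρ := by
    have h1 : α * (⨅ s : S, d s) ≤ 1 := mul_le_one₀ hα1.le hdmin_pos.le hdmin_le_one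
    have h2 : α * (⨅ s : S, d s) * (1 - γ) ≤ 1 :=
      mul_le_one₀ h1 (by linarith) (by linarith)
    rw [hρ]; linarith
  -- entries of A
  have hAentry : ∀ i j, A i j
      = (if i = j then (1:ℝ) else 0) + α * (γ * (d i * P i j) - if i = j then d i else 0) := by
    intro i j
    simp [hA, Matrix.add_apply, Matrix.smul_apply, Matrix.sub_apply, Matrix.one_apply,
      Matrix.diagonal_apply, Matrix.diagonal_mul, smul_eq_mul]
  have hA0 : ∀ i j, 0 ≤ A i j := by
    intro i j
    rw [hAentry]
    by_cases h : i = j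
    · subst h
      rw [if_pos rfl, if_pos rfl]
      nlinarith [hd i, hds_le_one i, hP0 i i, mul_nonneg (mul_nonneg hγ0 (hd i).le) (hP0 i i)]
    · simp only [if_neg h]
      nlinarith [mul_nonneg (mul_nonneg hγ0 (hd i).le) (hP0 i j)]
  have hArow : ∀ i, ∑ j, A i j ≤ ρ := by
    intro i
    have hsum : ∑ j, A i j = 1 - α * d i * (1 - γ) := by
      have : ∀ j, A i j = (if i = j then (1:ℝ) else 0)
          + α * γ * (d i * P i j) - α * (if i = j then d i else 0) := by
        intro j; rw [hAentry]; ring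
      rw [Finset.sum_congr rfl (fun j _ => this j)]
      rw [Finset.sum_sub_distrib, Finset.sum_add_distrib, ← Finset.mul_sum, ← Finset.mul_sum,
        ← Finset.mul_sum, hP1 i]
      simp [Finset.sum_ite_eq, Finset.mem_univ]
      ring
    rw [hsum, hρ]
    nlinarith [hdmin_le i, mul_nonneg hα0.le (by linarith : (0:ℝ) ≤ 1 - γ)]
  -- powers of A
  have hpow : ∀ k : ℕ, (∀ i j, 0 ≤ (A ^ k) i j) ∧ (∀ i, ∑ j, (A ^ k) i j ≤ ρ ^ k) := by
    intro k
    induction k with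
    | zero =>
      constructor
      · intro i j; rw [pow_zero, Matrix.one_apply]; positivity
      · intro i; simp [Matrix.one_apply]
    | succ k ih =>
      obtain ⟨ih0, ih1⟩ := ih
      have h0 : ∀ i j, 0 ≤ (A ^ (k+1)) i j := by
        intro i j
        rw [pow_succ, Matrix.mul_apply]
        exact Finset.sum_nonneg fun l _ => mul_nonneg (ih0 i l) (hA0 l j)
      refine ⟨h0, fun i => ?_⟩
      have : ∑ j, (A ^ (k+1)) i j = ∑ l, (A ^ k) i l * ∑ j, A l j := by
        simp only [pow_succ, Matrix.mul_apply]
        rw [Finset.sum_comm]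
        exact Finset.sum_congr rfl fun l _ => by rw [Finset.mul_sum]
      rw [this, pow_succ]
      calc ∑ l, (A ^ k) i l * ∑ j, A l j ≤ ∑ l, (A ^ k) i l * ρ := by
            exact Finset.sum_le_sum fun l _ => mul_le_mul_of_nonneg_left (hArow l) (ih0 i l)
        _ = (∑ l, (A ^ k) i l) * ρ := by rw [← Finset.sum_mul]
        _ ≤ ρ ^ k * ρ := mul_le_mul_of_nonneg_right (ih1 i) hρ0
  have hentry : ∀ (k : ℕ) i j, (A ^ k) i j ≤ ρ ^ k := by
    intro k i j
    calc (A ^ k) i j ≤ ∑ l, (A ^ k) i l :=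
          Finset.single_le_sum (fun l _ => (hpow k).1 i l) (Finset.mem_univ j)
      _ ≤ ρ ^ k := (hpow k).2 i
  -- summability
  have hρsq0 : 0 ≤ ρ ^ 2 := sq_nonneg ρ
  have hρsq1 : ρ ^ 2 < 1 := by nlinarith
  have hf_nonneg : ∀ (k : ℕ) i j, 0 ≤ ((A ^ k)ᵀ * (A ^ k)) i j := by
    intro k i j
    rw [Matrix.mul_apply]
    exact Finset.sum_nonneg fun l _ =>
      mul_nonneg ((hpow k).1 l i) ((hpow k).1 l j)
  have hf_bound : ∀ (k : ℕ) i j, ((A ^ k)ᵀ * (A ^ k)) i j ≤ (Fintype.card S : ℝ) * (ρ ^ 2) ^ k := by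
    intro k i j
    rw [Matrix.mul_apply]
    simp only [Matrix.transpose_apply]
    calc ∑ l, (A ^ k) l i * (A ^ k) l j ≤ ∑ l : S, ρ ^ k * ρ ^ k := by
          refine Finset.sum_le_sum fun l _ => ?_
          exact mul_le_mul (hentry k l i) (hentry k l j) ((hpow k).1 l j) (by positivity)
      _ = (Fintype.card S : ℝ) * (ρ ^ 2) ^ k := by
          rw [Finset.sum_const, Finset.card_univ, nsmul_eq_mul]
          ring
  have hsum : Summable (fun k : ℕ => (A ^ k)ᵀ * (A ^ k)) := by
    refine Pi.summable.2 fun i => Pi.summable.2 fun j => ?_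
    refine Summable.of_nonneg_of_le (fun k => hf_nonneg k i j) (fun k => hf_bound k i j) ?_
    exact (summable_geometric_of_lt_one hρsq0 hρsq1).mul_left _
  set M : Matrix S S ℝ := ∑' k : ℕ, (A ^ k)ᵀ * (A ^ k) with hM
  have hMapply : ∀ i j, M i j = ∑' k : ℕ, ((A ^ k)ᵀ * (A ^ k)) i j := by
    intro i j
    rw [hM]; exact (congrFun (tsum_apply (x := i) hsum) j).trans (tsum_apply (x := j) (Pi.summable.1 hsum i))
  -- quadratic form
  have hquad : ∀ v : S → ℝ,
      Summable (fun k : ℕ => v ⬝ᵥ ((A ^ k)ᵀ * (A ^ k)) *ᵥ v) ∧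
      v ⬝ᵥ M *ᵥ v = ∑' k : ℕ, v ⬝ᵥ ((A ^ k)ᵀ * (A ^ k)) *ᵥ v := by
    intro v
    let φ : Matrix S S ℝ →ₗ[ℝ] ℝ :=
      { toFun := fun X => v ⬝ᵥ X *ᵥ v
        map_add' := fun X Y => by simp [Matrix.add_mulVec, dotProduct_add]
        map_smul' := fun a X => by
          simp [Matrix.smul_mulVec, dotProduct_smul, smul_eq_mul] }
    let Φ : Matrix S S ℝ →L[ℝ] ℝ := LinearMap.toContinuousLinearMap φ
    have hΦ : ∀ X, Φ X = v ⬝ᵥ X *ᵥ v := fun X => rfl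
    constructor
    · exact hsum.map Φ Φ.continuous
    · exact Φ.map_tsum hsum
  -- dot product facts
  have hdotnn : ∀ w : S → ℝ, 0 ≤ w ⬝ᵥ w := fun w =>
    Finset.sum_nonneg fun i _ => mul_self_nonneg (w i)
  have hdotpos : ∀ w : S → ℝ, w ≠ 0 → 0 < w ⬝ᵥ w := fun w hw =>
    (hdotnn w).lt_of_ne fun h => hw (dotProduct_self_eq_zero.mp h.symm)
  -- quadratic form of each term
  have hterm : ∀ (k : ℕ) (v : S → ℝ),
      v ⬝ᵥ ((A ^ k)ᵀ * (A ^ k)) *ᵥ v = (A ^ k *ᵥ v) ⬝ᵥ (A ^ k *ᵥ v) := by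
    intro k v
    rw [← Matrix.mulVec_mulVec, Matrix.dotProduct_mulVec, Matrix.vecMul_transpose]
  have hterm_nonneg : ∀ (k : ℕ) (v : S → ℝ), 0 ≤ v ⬝ᵥ ((A ^ k)ᵀ * (A ^ k)) *ᵥ v := by
    intro k v; rw [hterm]; exact hdotnn _
  have hterm0 : ∀ v : S → ℝ, v ⬝ᵥ ((A ^ 0)ᵀ * (A ^ 0)) *ᵥ v = v ⬝ᵥ v := by
    intro v
    simp [Matrix.one_mulVec]
  have hterm_le : ∀ (k : ℕ) (v : S → ℝ),
      v ⬝ᵥ ((A ^ k)ᵀ * (A ^ k)) *ᵥ v ≤ (Fintype.card S : ℝ) * (ρ ^ 2) ^ k * (v ⬝ᵥ v) := by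
    intro k v
    rw [hterm]
    have hW : 0 ≤ v ⬝ᵥ v := hdotnn v
    have habs : ∀ j, |v j| ≤ Real.sqrt (v ⬝ᵥ v) := by
      intro j
      have h1 : |v j| = Real.sqrt (v j * v j) := by
        rw [← Real.sqrt_mul_self (abs_nonneg (v j)), abs_mul_abs_self]
      rw [h1]
      exact Real.sqrt_le_sqrt
        (Finset.single_le_sum (fun l _ => mul_self_nonneg (v l)) (Finset.mem_univ j))
    have hcomp : ∀ i, |(A ^ k *ᵥ v) i| ≤ ρ ^ k * Real.sqrt (v ⬝ᵥ v) := by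
      intro i
      calc |(A ^ k *ᵥ v) i| = |∑ j, (A ^ k) i j * v j| := rfl
        _ ≤ ∑ j, |(A ^ k) i j * v j| := Finset.abs_sum_le_sum_abs _ _
        _ = ∑ j, (A ^ k) i j * |v j| := by
            refine Finset.sum_congr rfl fun j _ => ?_
            rw [abs_mul, abs_of_nonneg ((hpow k).1 i j)]
        _ ≤ ∑ j, (A ^ k) i j * Real.sqrt (v ⬝ᵥ v) :=
            Finset.sum_le_sum fun j _ =>
              mul_le_mul_of_nonneg_left (habs j) ((hpow k).1 i j)
        _ = (∑ j, (A ^ k) i j) * Real.sqrt (v ⬝ᵥ v) := by rw [Finset.sum_mul]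
        _ ≤ ρ ^ k * Real.sqrt (v ⬝ᵥ v) :=
            mul_le_mul_of_nonneg_right ((hpow k).2 i) (Real.sqrt_nonneg _)
    have hpowsq : ρ ^ k * ρ ^ k = (ρ ^ 2) ^ k := by
      rw [← pow_add, ← pow_mul, two_mul]
    calc (A ^ k *ᵥ v) ⬝ᵥ (A ^ k *ᵥ v) = ∑ i, (A ^ k *ᵥ v) i * (A ^ k *ᵥ v) i := rfl
      _ ≤ ∑ i : S, (ρ ^ k * Real.sqrt (v ⬝ᵥ v)) * (ρ ^ k * Real.sqrt (v ⬝ᵥ v)) := by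
          refine Finset.sum_le_sum fun i _ => ?_
          rw [← abs_mul_abs_self ((A ^ k *ᵥ v) i)]
          exact mul_self_le_mul_self (abs_nonneg _) (hcomp i)
      _ = (Fintype.card S : ℝ) * (ρ ^ 2) ^ k * (v ⬝ᵥ v) := by
          rw [Finset.sum_const, Finset.card_univ, nsmul_eq_mul]
          have h2 : (ρ ^ k * Real.sqrt (v ⬝ᵥ v)) * (ρ ^ k * Real.sqrt (v ⬝ᵥ v))
              = (ρ ^ k * ρ ^ k) * (Real.sqrt (v ⬝ᵥ v) * Real.sqrt (v ⬝ᵥ v)) := by ring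
          rw [h2, hpowsq, Real.mul_self_sqrt hW]
          ring
  -- Hermitian
  have hherm : M.IsHermitian := by
    have hsymm : ∀ i j, M i j = M j i := by
      intro i j
      rw [hMapply, hMapply]
      refine tsum_congr fun k => ?_
      rw [Matrix.mul_apply, Matrix.mul_apply]
      simp only [Matrix.transpose_apply]
      exact Finset.sum_congr rfl fun l _ => mul_comm _ _
    show Mᴴ = M
    ext i j
    rw [Matrix.conjTranspose_apply, star_trivial]
    exact hsymm j i
  -- positive definiteness
  have hposdef : M.PosDef := by
    refine Matrix.PosDef.of_dotProduct_mulVec_pos hherm fun x hx => ?_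
    have hst : star x = x := funext fun i => star_trivial _
    rw [hst]
    calc (0:ℝ) < x ⬝ᵥ x := hdotpos x hx
      _ = x ⬝ᵥ ((A ^ 0)ᵀ * (A ^ 0)) *ᵥ x := (hterm0 x).symm
      _ ≤ ∑' k : ℕ, x ⬝ᵥ ((A ^ k)ᵀ * (A ^ k)) *ᵥ x :=
          Summable.le_tsum (hquad x).1 0 (fun j _ => hterm_nonneg j x)
      _ = x ⬝ᵥ M *ᵥ x := ((hquad x).2).symm
  -- Lyapunov equation
  have hlyap : Aᵀ * M * A = M - 1 := by
    let ψ : Matrix S S ℝ →ₗ[ℝ] Matrix S S ℝ :=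
      { toFun := fun X => Aᵀ * X * A
        map_add' := fun X Y => by
          show Aᵀ * (X + Y) * A = Aᵀ * X * A + Aᵀ * Y * A
          rw [Matrix.mul_add, Matrix.add_mul]
        map_smul' := fun a X => by
          show Aᵀ * (a • X) * A = a • (Aᵀ * X * A)
          rw [Matrix.mul_smul, Matrix.smul_mul] }
    let Ψ : Matrix S S ℝ →L[ℝ] Matrix S S ℝ := LinearMap.toContinuousLinearMap ψ
    have h1 : Aᵀ * M * A = ∑' k : ℕ, Aᵀ * ((A ^ k)ᵀ * (A ^ k)) * A := Ψ.map_tsum hsum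
    have h2 : ∀ k : ℕ, Aᵀ * ((A ^ k)ᵀ * (A ^ k)) * A = (A ^ (k+1))ᵀ * (A ^ (k+1)) := by
      intro k
      rw [pow_succ, Matrix.transpose_mul]
      simp [Matrix.mul_assoc]
    have h3 := Summable.tsum_eq_zero_add hsum
    have h4 : ((A ^ 0)ᵀ * (A ^ 0) : Matrix S S ℝ) = 1 := by simp
    rw [h1, tsum_congr h2, eq_sub_iff_add_eq, add_comm]
    rw [← h4]
    exact (hM.trans h3).symm
  -- eigenvalue bounds
  have hkey : ∀ (μ : ℝ) (v : S → ℝ), v ≠ 0 → M *ᵥ v = μ • v →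
      1 ≤ μ ∧ μ ≤ (Fintype.card S : ℝ) / (1 - ρ) := by
    intro μ v hv heig
    have hW : 0 < v ⬝ᵥ v := hdotpos v hv
    have hMv : v ⬝ᵥ M *ᵥ v = μ * (v ⬝ᵥ v) := by
      rw [heig, dotProduct_smul, smul_eq_mul]
    obtain ⟨hg, hsumval⟩ := hquad v
    have hlow : v ⬝ᵥ v ≤ μ * (v ⬝ᵥ v) := by
      rw [← hMv, hsumval]
      calc v ⬝ᵥ v = v ⬝ᵥ ((A ^ 0)ᵀ * (A ^ 0)) *ᵥ v := (hterm0 v).symm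
        _ ≤ ∑' k : ℕ, v ⬝ᵥ ((A ^ k)ᵀ * (A ^ k)) *ᵥ v :=
            Summable.le_tsum hg 0 (fun j _ => hterm_nonneg j v)
    have h1le : 1 ≤ μ := by nlinarith
    have hgb : Summable (fun k : ℕ => ((Fintype.card S : ℝ) * (v ⬝ᵥ v)) * (ρ ^ 2) ^ k) :=
      (summable_geometric_of_lt_one hρsq0 hρsq1).mul_left _
    have hup : μ * (v ⬝ᵥ v) ≤ (Fintype.card S : ℝ) * (1 - ρ ^ 2)⁻¹ * (v ⬝ᵥ v) := by
      rw [← hMv, hsumval]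
      calc ∑' k : ℕ, v ⬝ᵥ ((A ^ k)ᵀ * (A ^ k)) *ᵥ v
          ≤ ∑' k : ℕ, ((Fintype.card S : ℝ) * (v ⬝ᵥ v)) * (ρ ^ 2) ^ k :=
            Summable.tsum_le_tsum (fun k => le_of_le_of_eq (hterm_le k v) (by ring)) hg hgb
        _ = ((Fintype.card S : ℝ) * (v ⬝ᵥ v)) * (1 - ρ ^ 2)⁻¹ := by
            rw [tsum_mul_left, tsum_geometric_of_lt_one hρsq0 hρsq1]
        _ = (Fintype.card S : ℝ) * (1 - ρ ^ 2)⁻¹ * (v ⬝ᵥ v) := by ring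
    refine ⟨h1le, ?_⟩
    have hμle : μ ≤ (Fintype.card S : ℝ) * (1 - ρ ^ 2)⁻¹ :=
      le_of_mul_le_mul_right hup hW
    have hinv : (1 - ρ ^ 2)⁻¹ ≤ (1 - ρ)⁻¹ :=
      inv_anti₀ (by linarith) (by nlinarith)
    calc μ ≤ (Fintype.card S : ℝ) * (1 - ρ ^ 2)⁻¹ := hμle
      _ ≤ (Fintype.card S : ℝ) * (1 - ρ)⁻¹ :=
          mul_le_mul_of_nonneg_left hinv (Nat.cast_nonneg _)
      _ = (Fintype.card S : ℝ) / (1 - ρ) := (div_eq_mul_inv _ _).symm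
  -- an eigenvalue exists
  have hne : ∃ μ : ℝ, ∃ v : S → ℝ, v ≠ 0 ∧ M.mulVec v = μ • v := by
    let i0 : S := Classical.arbitrary S
    refine ⟨hherm.eigenvalues i0, (WithLp.equiv 2 _) (hherm.eigenvectorBasis i0), ?_,
      hherm.mulVec_eigenvectorBasis i0⟩
    intro h
    exact hherm.eigenvectorBasis.orthonormal.ne_zero i0
      ((WithLp.equiv 2 _).injective (by simpa using h))
  refine ⟨M, hposdef, hsum, rfl, hlyap, ?_, ?_⟩
  · unfold lamMin
    refine le_csInf ?_ ?_
    · obtain ⟨μ, v, hv, he⟩ := hne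
      exact ⟨μ, v, hv, he⟩
    · rintro μ ⟨v, hv, he⟩
      exact (hkey μ v hv he).1
  · unfold lamMax
    refine Real.sSup_le ?_ ?_
    · rintro μ ⟨v, hv, he⟩
      exact (hkey μ v hv he).2
    · exact div_nonneg (Nat.cast_nonneg _) (by linarith)
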